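/- Let D be the n×n Vandermonde matrix with D_{jα} = z_j^α (j = 1,...,n; α = 0,...,n−1), where z₁,...,z_n are pairwise distinct complex numbers. Then D^T · diag(χ₁,...,χ_n) · D = η, where χ_j = 1/∏_{m ≠ j}(z_j − z_m) and η is the matrix with η_{αβ} = 0 if α+β < n−1, η_{αβ} = 1 if α+β = n−1, and η_{αβ} = m_{α+β−n+1}(z) if α+β > n−1, with m_k the complete homogeneous symmetric polynomial. -/

import Mathlib

open Finset Polynomial

variable {ι : Type*} [DecidableEq ι]

/-- complete homogeneous sum over a finset of nodes -/
noncomputable def Hsum (z : ι → ℂ) (s : Finset ι) (m : ℕ) : ℂ :=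
  ∑ μ ∈ s.sym m, ((μ : Multiset ι).map z).prod

lemma Hsum_zero (z : ι → ℂ) (s : Finset ι) : Hsum z s 0 = 1 := by
  simp only [Hsum, Finset.sym_zero, Finset.sum_singleton]; rfl

lemma Hsum_singleton (z : ι → ℂ) (a : ι) (m : ℕ) : Hsum z {a} m = z a ^ m := by
  simp [Hsum, Finset.sym_singleton, Sym.coe_replicate]

lemma Hsum_rec (z : ι → ℂ) {a : ι} {s : Finset ι} (ha : a ∉ s) (m : ℕ) :
    Hsum z (insert a s) (m + 1) = z a * Hsum z (insert a s) m + Hsum z s (m + 1) := by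
  classical
  have hsplit : (insert a s).sym (m + 1)
      = ((insert a s).sym m).image (Sym.cons a) ∪ s.sym (m + 1) := by
    ext μ
    simp only [Finset.mem_union, Finset.mem_image, Finset.mem_sym_iff]
    constructor
    · intro h
      by_cases hm : a ∈ μ
      · refine Or.inl ⟨μ.erase a hm, ?_, Sym.cons_erase hm⟩
        intro b hb
        exact h b (Multiset.mem_of_mem_erase hb)
      · refine Or.inr fun b hb => ?_
        rcases Finset.mem_insert.mp (h b hb) with rfl | hbs
        · exact absurd hb hm
        · exact hbs
    · rintro (⟨ν, hν, rfl⟩ | h)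
      · intro b hb
        rcases Sym.mem_cons.mp hb with rfl | hbν
        · exact Finset.mem_insert_self _ _
        · exact hν b hbν
      · exact fun b hb => Finset.mem_insert_of_mem (h b hb)
  have hdisj : Disjoint (((insert a s).sym m).image (Sym.cons a)) (s.sym (m + 1)) := by
    rw [Finset.disjoint_left]
    rintro μ hμ hμ'
    rcases Finset.mem_image.mp hμ with ⟨ν, _, rfl⟩
    exact ha ((Finset.mem_sym_iff.mp hμ') a (Sym.mem_cons_self a ν))
  rw [Hsum, hsplit, Finset.sum_union hdisj,
    Finset.sum_image (fun x _ y _ h => (Sym.cons_inj_right a x y).mp h)]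
  congr 1
  rw [Hsum, Finset.mul_sum]
  refine Finset.sum_congr rfl fun ν _ => ?_
  rw [Sym.coe_cons, Multiset.map_cons, Multiset.prod_cons]

/-- the weighted power sum -/
noncomputable def Fsum (z : ι → ℂ) (s : Finset ι) (k : ℕ) : ℂ :=
  ∑ j ∈ s, z j ^ k * (∏ m ∈ s.erase j, (z j - z m))⁻¹

lemma Fsum_rec (z : ι → ℂ) {a : ι} {s : Finset ι} (ha : a ∉ s)
    (hne : ∀ j ∈ s, z j ≠ z a) (k : ℕ) :
    Fsum z (insert a s) (k + 1) = z a * Fsum z (insert a s) k + Fsum z s k := by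
  classical
  rw [Fsum, Fsum, Fsum, Finset.mul_sum, Finset.sum_insert ha, Finset.sum_insert ha,
    add_assoc, ← Finset.sum_add_distrib]
  congr 1
  · ring
  refine Finset.sum_congr rfl fun j hj => ?_
  have hja : j ≠ a := fun h => ha (h ▸ hj)
  have hkey : (insert a s).erase j = insert a (s.erase j) :=
    Finset.erase_insert_of_ne hja.symm
  have hprod : ∏ m ∈ (insert a s).erase j, (z j - z m)
      = (z j - z a) * ∏ m ∈ s.erase j, (z j - z m) := by
    rw [hkey, Finset.prod_insert (fun h => ha (Finset.mem_of_mem_erase h))]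
  have hza : z j - z a ≠ 0 := sub_ne_zero_of_ne (hne j hj)
  rw [hprod, mul_inv, ← mul_assoc, ← mul_assoc]
  have : z j ^ (k + 1) * (z j - z a)⁻¹ = z a * z j ^ k * (z j - z a)⁻¹ + z j ^ k := by
    field_simp
    ring
  calc z j ^ (k + 1) * (z j - z a)⁻¹ * (∏ m ∈ s.erase j, (z j - z m))⁻¹
      = (z a * z j ^ k * (z j - z a)⁻¹ + z j ^ k) * (∏ m ∈ s.erase j, (z j - z m))⁻¹ := by
        rw [this]
    _ = z a * (z j ^ k * (z j - z a)⁻¹ * (∏ m ∈ s.erase j, (z j - z m))⁻¹)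
        + z j ^ k * (∏ m ∈ s.erase j, (z j - z m))⁻¹ := by ring
    _ = _ := by ring

lemma Fsum_low {z : ι → ℂ} {s : Finset ι} (hs : s.Nonempty)
    (hinj : Set.InjOn z s) {k : ℕ} (hk : k ≤ #s - 1) :
    Fsum z s k = if k = #s - 1 then 1 else 0 := by
  classical
  have hcard : 1 ≤ #s := Finset.card_pos.mpr hs
  have hdeg : (X ^ k : ℂ[X]).degree < #s := by
    rw [degree_X_pow]
    exact_mod_cast lt_of_le_of_lt hk (Nat.pred_lt (Nat.one_le_iff_ne_zero.mp hcard))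
  have hinterp : (X ^ k : ℂ[X]) = Lagrange.interpolate s z fun i => (X ^ k : ℂ[X]).eval (z i) :=
    Lagrange.eq_interpolate hinj hdeg
  have hcoeff : (Lagrange.interpolate s z fun i => (X ^ k : ℂ[X]).eval (z i)).coeff (#s - 1)
      = Fsum z s k := by
    rw [Lagrange.interpolate_apply, finset_sum_coeff, Fsum]
    refine Finset.sum_congr rfl fun j hj => ?_
    have hb : Lagrange.basis s z j = C (Lagrange.nodalWeight s z j) * Lagrange.nodal (s.erase j) z := by
      rw [Lagrange.basis_eq_prod_sub_inv_mul_nodal_div hj, Lagrange.nodal_erase_eq_nodal_div hj]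
    rw [hb, ← mul_assoc, ← C_mul, coeff_C_mul]
    have hmon : (Lagrange.nodal (s.erase j) z).Monic := Lagrange.nodal_monic
    have hdeg' : (Lagrange.nodal (s.erase j) z).natDegree = #s - 1 := by
      rw [Lagrange.natDegree_nodal, Finset.card_erase_of_mem hj]
    rw [← hdeg', hmon.coeff_natDegree, mul_one, eval_pow, eval_X,
      Lagrange.nodalWeight, ← Finset.prod_inv_distrib]
  rw [← hcoeff, ← hinterp, coeff_X_pow]
  simp [eq_comm]

lemma Fsum_eq (z : ι → ℂ) : ∀ (s : Finset ι), s.Nonempty → Set.InjOn z s → ∀ k,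
    Fsum z s k = if k < #s - 1 then 0 else Hsum z s (k - (#s - 1)) := by
  classical
  intro s
  induction s using Finset.cons_induction with
  | empty => exact fun h => absurd h (by simp)
  | cons a t hat IH =>
    intro hs hinj k
    rw [Finset.cons_eq_insert] at *
    rcases t.eq_empty_or_nonempty with rfl | hne
    · simp only [insert_empty_eq, Finset.card_singleton, Nat.sub_self, Nat.not_lt_zero,
        if_neg, Nat.sub_zero, Hsum_singleton]
      simp [Fsum]
    · have hinj' : Set.InjOn z t := hinj.mono (by intro x hx; simp [hx])
      have hIH := IH hne hinj'
      have hct : 1 ≤ #t := Finset.card_pos.mpr hne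
      have hcs : #(insert a t) = #t + 1 := Finset.card_insert_of_notMem hat
      have hne' : ∀ j ∈ t, z j ≠ z a := by
        intro j hj hzz
        exact hat (by rwa [hinj (Finset.mem_insert_of_mem hj) (Finset.mem_insert_self a t) hzz] at hj)
      induction k with
      | zero =>
        rw [Fsum_low hs hinj (by omega), hcs]
        have h1 : ¬ (0 = #t + 1 - 1) := by omega
        have h2 : 0 < #t + 1 - 1 := by omega
        rw [if_neg h1, if_pos h2]
      | succ k ihk =>
        rcases lt_trichotomy (k + 1) #t with hlt | heq | hgt
        · rw [Fsum_low hs hinj (by omega), hcs,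
            if_neg (show ¬ k + 1 = #t + 1 - 1 by omega), if_pos (show k + 1 < #t + 1 - 1 by omega)]
        · rw [Fsum_low hs hinj (by omega), hcs,
            if_pos (show k + 1 = #t + 1 - 1 by omega), if_neg (show ¬ k + 1 < #t + 1 - 1 by omega),
            show k + 1 - (#t + 1 - 1) = 0 by omega, Hsum_zero]
        · have hk : #t ≤ k := by omega
          rw [Fsum_rec z hat hne' k, ihk, hIH k, hcs]
          rw [if_neg (by omega), if_neg (by omega), if_neg (by omega),
            show k - (#t + 1 - 1) = k - #t by omega,
            show k - (#t - 1) = k - #t + 1 by omega,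
            show k + 1 - (#t + 1 - 1) = (k - #t) + 1 by omega,
            Hsum_rec z hat (k - #t)]

/-- for the Vandermonde matrix `D_{jα} = z_j^α` with pairwise
distinct `z_j`, one has `Dᵀ · diag(χ₁,…,χ_n) · D = η`, where
`χ_j = 1/∏_{m≠j}(z_j - z_m)` and `η_{αβ}` is `0` for `α+β < n-1`, `1` for
`α+β = n-1`, and the complete homogeneous symmetric polynomial
`m_{α+β-n+1}(z)` for `α+β > n-1` (0-based indices `α, β`). -/
theorem stmt15 (n : ℕ) (hn : 1 ≤ n) (z : Fin n → ℂ) (hz : Function.Injective z) :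
    (let D : Matrix (Fin n) (Fin n) ℂ := Matrix.of fun j α => z j ^ (α : ℕ)
     let χ : Fin n → ℂ := fun j => (∏ m ∈ Finset.univ.erase j, (z j - z m))⁻¹
     let η : Matrix (Fin n) (Fin n) ℂ := Matrix.of fun α β =>
       if (α : ℕ) + (β : ℕ) < n - 1 then 0
       else if (α : ℕ) + (β : ℕ) = n - 1 then 1
       else ∑ μ : Sym (Fin n) ((α : ℕ) + (β : ℕ) - n + 1), (μ.1.map z).prod
     D.transpose * Matrix.diagonal χ * D = η) := by
  dsimp only
  ext α β
  rw [Matrix.mul_apply]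
  simp only [Matrix.mul_diagonal, Matrix.transpose_apply, Matrix.of_apply]
  have huniv : (Finset.univ : Finset (Fin n)).Nonempty := ⟨⟨0, hn⟩, Finset.mem_univ _⟩
  have hcard : #(Finset.univ : Finset (Fin n)) = n := by simp
  have key := Fsum_eq z Finset.univ huniv hz.injOn ((α : ℕ) + (β : ℕ))
  rw [hcard] at key
  have hlhs : ∑ j, z j ^ (α : ℕ) * (∏ m ∈ Finset.univ.erase j, (z j - z m))⁻¹ * z j ^ (β : ℕ)
      = Fsum z Finset.univ ((α : ℕ) + (β : ℕ)) := by
    rw [Fsum]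
    exact Finset.sum_congr rfl fun j _ => by rw [pow_add]; ring
  rw [hlhs, key]
  have hH : ∀ m, Hsum z Finset.univ m = ∑ μ : Sym (Fin n) m, ((μ : Multiset (Fin n)).map z).prod := by
    intro m
    rw [Hsum, Finset.sym_univ]
  rcases lt_trichotomy ((α : ℕ) + (β : ℕ)) (n - 1) with hlt | heq | hgt
  · rw [if_pos hlt, if_pos hlt]
  · rw [if_neg (by omega), if_neg (by omega), if_pos heq,
      show (α : ℕ) + (β : ℕ) - (n - 1) = 0 by omega, Hsum_zero]
  · rw [if_neg (by omega), if_neg (by omega), if_neg (by omega),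
      show (α : ℕ) + (β : ℕ) - (n - 1) = (α : ℕ) + (β : ℕ) - n + 1 by omega, hH]
    rfl
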